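/- arXiv:1412.8739 — 4 statements merged into one kernel-verified Lean document; each statement's English description precedes it below -/
import Mathlib

section
/- Let P be a ground logic program over atoms HB, M_P its least Herbrand model, S ⊆ HB a specification, and |·| : HB → ℕ a partial level mapping (represented as a function |·| : HB → Option ℕ). Say an atom H is recurrently covered by P w.r.t. S and |·| if there exists a clause (H, Bs) ∈ P such that |H| and |B| are defined for all B ∈ Bs, every B ∈ Bs lies in S, and |H| > |B| for all B ∈ Bs. If every atom of S is recurrently covered by P w.r.t. S and |·|, then S ⊆ M_P (P is complete w.r.t. S). -/
def IsModel {HB : Type*} (P : Set (HB × List HB)) (S : Set HB) : Prop :=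
  ∀ c ∈ P, (∀ B ∈ c.2, B ∈ S) → c.1 ∈ S

def LeastModel {HB : Type*} (P : Set (HB × List HB)) : Set HB :=
  ⋂₀ {S | IsModel P S}

/-- `H` is recurrently covered by `P` w.r.t. `S` and the partial level mapping `lvl`. -/
def RecurrentlyCovered {HB : Type*} (P : Set (HB × List HB)) (S : Set HB)
    (lvl : HB → Option ℕ) (H : HB) : Prop :=
  ∃ Bs nH, (H, Bs) ∈ P ∧ lvl H = some nH ∧
    ∀ B ∈ Bs, B ∈ S ∧ ∃ nB, lvl B = some nB ∧ nB < nH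

theorem completeness_recurrently_covered {HB : Type*} (P : Set (HB × List HB))
    (S : Set HB) (lvl : HB → Option ℕ)
    (h : ∀ A ∈ S, RecurrentlyCovered P S lvl A) :
    S ⊆ LeastModel P := by
  have key : ∀ n : ℕ, ∀ A ∈ S, lvl A = some n → A ∈ LeastModel P := by
    intro n
    induction n using Nat.strong_induction_on with
    | _ n ih =>
      intro A hA hlvl
      obtain ⟨Bs, nH, hP, hlvlA, hB⟩ := h A hA
      rw [hlvl] at hlvlA
      injection hlvlA with hn
      subst hn
      intro T hT
      apply hT (A, Bs) hP
      intro B hBmem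
      obtain ⟨hBS, nB, hlvlB, hlt⟩ := hB B hBmem
      exact ih nB hlt B hBS hlvlB T hT
  intro A hA
  obtain ⟨Bs, nH, _, hlvlA, _⟩ := h A hA
  exact key nH A hA hlvlA
end

section
/- Let P be a ground logic program over atoms HB that is recurrent w.r.t. a (total) level mapping |·| : HB → ℕ, meaning that for every clause (H, Bs) ∈ P and every B ∈ Bs, |H| > |B|. Let S ⊆ HB be a specification such that every atom of S is covered by P w.r.t. S (i.e., for each H ∈ S there is a clause (H, Bs) ∈ P with all atoms of Bs in S). Then S ⊆ M_P, where M_P is the least Herbrand model of P. -/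
def Covered {HB : Type*} (P : Set (HB × List HB)) (S : Set HB) (H : HB) : Prop :=
  ∃ Bs, (H, Bs) ∈ P ∧ ∀ B ∈ Bs, B ∈ S

/-- `P` is recurrent w.r.t. a total level mapping `lvl`. -/
def Recurrent {HB : Type*} (P : Set (HB × List HB)) (lvl : HB → ℕ) : Prop :=
  ∀ c ∈ P, ∀ B ∈ c.2, lvl B < lvl c.1

theorem completeness_recurrent {HB : Type*} (P : Set (HB × List HB))
    (S : Set HB) (lvl : HB → ℕ) (hrec : Recurrent P lvl)
    (hcov : ∀ H ∈ S, Covered P S H) :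
    S ⊆ LeastModel P := by
  have key : ∀ n : ℕ, ∀ H ∈ S, lvl H = n → H ∈ LeastModel P := by
    intro n
    induction n using Nat.strong_induction_on with
    | _ n ih =>
      intro H hHS hlvl
      obtain ⟨Bs, hcl, hBs⟩ := hcov H hHS
      intro M hM
      exact hM (H, Bs) hcl (fun B hB =>
        ih (lvl B) (hlvl ▸ hrec _ hcl B hB) B (hBs B hB) rfl M hM)
  exact fun H hH => key (lvl H) H hH rfl
end

section
/- Let P be a ground logic program over atoms HB and M_P its least Herbrand model, defined inductively (H ∈ M_P iff there is a clause (H, Bs) ∈ P with all atoms of Bs in M_P, with the least such set). If P is complete w.r.t. a specification S (S ⊆ M_P), then there exist a specification S' with S ⊆ S' ⊆ HB and a partial level mapping |·| : HB → Option ℕ such that every atom of S' is recurrently covered by P w.r.t. S' and |·| (i.e., for each H ∈ S' there is a clause (H, Bs) ∈ P with all atoms of Bs in S', with |H| and all |B| for B ∈ Bs defined, and |H| > |B| for all B ∈ Bs). -/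
def Stage {HB : Type*} (P : Set (HB × List HB)) : ℕ → Set HB
  | 0 => ∅
  | n + 1 => {H | ∃ Bs, (H, Bs) ∈ P ∧ ∀ B ∈ Bs, B ∈ Stage P n}

lemma Stage_succ_mono {HB : Type*} (P : Set (HB × List HB)) :
    ∀ n, Stage P n ⊆ Stage P (n + 1)
  | 0 => by intro A hA; exact hA.elim
  | n + 1 => by
    rintro A ⟨Bs, hP, hB⟩
    exact ⟨Bs, hP, fun B hb => Stage_succ_mono P n (hB B hb)⟩

lemma Stage_mono {HB : Type*} (P : Set (HB × List HB)) {m n : ℕ} (h : m ≤ n) :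
    Stage P m ⊆ Stage P n := by
  induction h with
  | refl => exact fun _ h => h
  | step _ ih => exact fun A hA => Stage_succ_mono P _ (ih hA)

theorem completeness_of_completeness_method {HB : Type*} (P : Set (HB × List HB))
    (S : Set HB) (hcompl : S ⊆ LeastModel P) :
    ∃ (S' : Set HB) (lvl : HB → Option ℕ),
      S ⊆ S' ∧ ∀ A ∈ S', RecurrentlyCovered P S' lvl A := by
  classical
  set S' : Set HB := {A | ∃ n, A ∈ Stage P n} with hS'
  have hdec : ∀ A : HB, Decidable (∃ n, A ∈ Stage P n) := fun A => Classical.dec _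
  set lvl : HB → Option ℕ := fun A =>
    if h : ∃ n, A ∈ Stage P n then some (Nat.find h) else none with hlvl
  refine ⟨S', lvl, ?_, ?_⟩
  · -- S ⊆ LeastModel P ⊆ S' since S' is a model
    have hmodel : IsModel P S' := by
      rintro ⟨H, Bs⟩ hc hB
      -- each B has a stage; bound by max over the list
      have key : ∀ (l : List HB), (∀ B ∈ l, B ∈ S') → ∃ n, ∀ B ∈ l, B ∈ Stage P n := by
        intro l
        induction l with
        | nil => exact fun _ => ⟨0, fun B hb => (List.not_mem_nil hb).elim⟩
        | cons b bs ih =>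
          intro hl
          obtain ⟨nb, hnb⟩ := hl b List.mem_cons_self
          obtain ⟨n, hn⟩ := ih (fun B hb => hl B (List.mem_cons_of_mem _ hb))
          refine ⟨max nb n, fun B hb => ?_⟩
          rcases List.mem_cons.1 hb with rfl | hb
          · exact Stage_mono P (le_max_left _ _) hnb
          · exact Stage_mono P (le_max_right _ _) (hn B hb)
      obtain ⟨n, hn⟩ := key Bs hB
      exact ⟨n + 1, Bs, hc, hn⟩
    exact fun A hA => hcompl hA S' hmodel
  · intro A hA
    obtain ⟨n, hn⟩ := hA
    have hex : ∃ n, A ∈ Stage P n := ⟨n, hn⟩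
    have hfind := Nat.find_spec hex
    -- Nat.find hex > 0 since Stage P 0 = ∅
    obtain ⟨m, hm⟩ : ∃ m, Nat.find hex = m + 1 := by
      cases h : Nat.find hex with
      | zero => rw [h] at hfind; exact hfind.elim
      | succ m => exact ⟨m, rfl⟩
    rw [hm] at hfind
    obtain ⟨Bs, hP, hB⟩ := hfind
    refine ⟨Bs, Nat.find hex, hP, ?_, ?_⟩
    · simp only [hlvl, dif_pos hex]
    · intro B hb
      have hBex : ∃ k, B ∈ Stage P k := ⟨m, hB B hb⟩
      refine ⟨hBex, Nat.find hBex, ?_, ?_⟩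
      · simp only [hlvl, dif_pos hBex]
      · calc Nat.find hBex ≤ m := Nat.find_min' hBex (hB B hb)
          _ < Nat.find hex := by omega
end

section
/- Let P be a ground logic program over atoms HB and let Π1, ..., Πn ⊆ P with P = Π1 ∪ ... ∪ Πn, and let S = S1 ∪ ... ∪ Sn ⊆ HB. Suppose that for each i, every atom of Si is covered by Πi w.r.t. S (there is a clause (H, Bs) ∈ Πi with all atoms of Bs in S), and that P is recurrent w.r.t. a level mapping |·| : HB → ℕ. Define, for each atom A, the set of 'compatible' indices as those i such that A ∈ S implies A ∈ Si. Then for any choice function σ : HB → Fin n picking for each atom A ∈ S a compatible index, the 'pruned' least model M_σ — the least set closed under the rule: if A ∈ S, (A, Bs) ∈ Π(σ A), and all atoms of Bs are in M_σ, then A ∈ M_σ — contains all of S: S ⊆ M_σ. -/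
/-- The pruned least model determined by a clause-selection function `σ`:
the least set closed under the rule that uses, for an atom `A ∈ S`,
only the clauses of the selected subprogram `Pi (σ A)`. -/
def PrunedModel {HB : Type*} {n : ℕ} (Pi : Fin n → Set (HB × List HB))
    (S : Set HB) (σ : HB → Fin n) : Set HB :=
  ⋂₀ {T | ∀ (A : HB) (Bs : List HB),
            A ∈ S → (A, Bs) ∈ Pi (σ A) → (∀ B ∈ Bs, B ∈ T) → A ∈ T}

theorem pruned_completeness {HB : Type*} {n : ℕ}
    (Pi : Fin n → Set (HB × List HB)) (P : Set (HB × List HB))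
    (Spec : Fin n → Set HB) (S : Set HB) (lvl : HB → ℕ)
    (hP : P = ⋃ i, Pi i) (hS : S = ⋃ i, Spec i)
    (hcov : ∀ i, ∀ A ∈ Spec i, Covered (Pi i) S A)
    (hrec : Recurrent P lvl)
    (σ : HB → Fin n) (hσ : ∀ A ∈ S, A ∈ Spec (σ A)) :
    S ⊆ PrunedModel Pi S σ := by
  suffices h : ∀ k A, lvl A = k → A ∈ S → A ∈ PrunedModel Pi S σ from
    fun A hA => h (lvl A) A rfl hA
  intro k
  induction k using Nat.strong_induction_on with
  | _ k IH =>
    intro A hk hA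
    subst hk
    obtain ⟨Bs, hmem, hBs⟩ := hcov (σ A) A (hσ A hA)
    intro T hT
    refine hT A Bs hA hmem fun B hB => ?_
    have hBP : (A, Bs) ∈ P := hP ▸ Set.mem_iUnion.2 ⟨σ A, hmem⟩
    exact IH (lvl B) (hrec _ hBP B hB) B rfl (hBs B hB) T hT
end
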